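/- Let f : ℝ → ℝ be differentiable on an open interval containing [a,b] ⊆ [0,∞) with a < b, let q > 1 and s ∈ (0,1), and suppose |f'|^q is s-convex in the second sense on [a,b]. Then |(f(a)+f(b))/2 - (1/(b-a)) ∫_a^b f(x) dx| ≤ ((b-a)/2) · (1/2)^((q-1)/q) · (1/(s+1) + ((1/2)^s - 2)/((s+1)(s+2)))^(1/q) · (|f'(a)|^q + |f'(b)|^q)^(1/q). -/

import Mathlib

open intervalIntegral MeasureTheory Set

lemma aux_rpow_cont {s : ℝ} (hs : 0 ≤ s) : Continuous fun t : ℝ => t ^ s :=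
  continuous_iff_continuousAt.2 fun x => Real.continuousAt_rpow_const x s (Or.inr hs)

lemma aux_rpow_succ {s t : ℝ} (hs : s + 1 ≠ 0) (ht : 0 ≤ t) : t ^ (s+1) = t ^ s * t := by
  rcases eq_or_ne t 0 with rfl | h
  · rw [Real.zero_rpow hs, mul_zero]
  · exact Real.rpow_add_one h s

lemma K_int {s : ℝ} (hs0 : 0 < s) :
    ∫ t in (0:ℝ)..1, |2*t-1| * t^s
      = 1/(s+1) + ((1/2:ℝ)^s - 2)/((s+1)*(s+2)) := by
  have hs1 : s + 1 ≠ 0 := by positivity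
  have hs2 : s + 2 ≠ 0 := by positivity
  have hc : Continuous fun t : ℝ => |2*t-1| * t^s :=
    (continuous_abs.comp (by continuity)).mul (aux_rpow_cont hs0.le)
  have hsplit : ∫ t in (0:ℝ)..1, |2*t-1| * t^s
      = (∫ t in (0:ℝ)..(1/2), |2*t-1| * t^s) + ∫ t in (1/2:ℝ)..1, |2*t-1| * t^s :=
    (intervalIntegral.integral_add_adjacent_intervals
      (hc.intervalIntegrable _ _) (hc.intervalIntegrable _ _)).symm
  have e1 : ∫ t in (0:ℝ)..(1/2), |2*t-1| * t^s = ∫ t in (0:ℝ)..(1/2), (t^s - 2 * t^(s+1)) := by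
    apply intervalIntegral.integral_congr
    intro t ht
    rw [uIcc_of_le (by norm_num)] at ht
    obtain ⟨h0, h1⟩ := ht
    show |2*t-1| * t^s = t^s - 2 * t^(s+1)
    rw [abs_of_nonpos (by linarith), aux_rpow_succ hs1 h0]
    ring
  have e2 : ∫ t in (1/2:ℝ)..1, |2*t-1| * t^s = ∫ t in (1/2:ℝ)..1, (2 * t^(s+1) - t^s) := by
    apply intervalIntegral.integral_congr
    intro t ht
    rw [uIcc_of_le (by norm_num)] at ht
    obtain ⟨h0, h1⟩ := ht
    show |2*t-1| * t^s = 2 * t^(s+1) - t^s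
    rw [abs_of_nonneg (by linarith), aux_rpow_succ hs1 (by linarith)]
    ring
  have i1 : ∀ u v : ℝ, 0 ≤ u → ∫ t in u..v, (t:ℝ)^s = (v^(s+1) - u^(s+1))/(s+1) :=
    fun u v _ => integral_rpow (Or.inl (by linarith))
  have i2 : ∀ u v : ℝ, 0 ≤ u → ∫ t in u..v, (t:ℝ)^(s+1) = (v^(s+2) - u^(s+2))/(s+2) := by
    intro u v _
    have := integral_rpow (a := u) (b := v) (r := s+1) (Or.inl (by linarith))
    rw [this]; ring_nf
  have half : (0:ℝ) < 1/2 := by norm_num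
  have hP1 : ((1:ℝ)/2)^(s+1) = (1/2:ℝ)^s * (1/2) := by
    rw [Real.rpow_add_one (by norm_num) s]
  have hP2 : ((1:ℝ)/2)^(s+2) = (1/2:ℝ)^s * (1/4) := by
    have : s + 2 = (s+1) + 1 := by ring
    rw [this, Real.rpow_add_one (by norm_num), hP1]; ring
  have one1 : (1:ℝ)^(s+1) = 1 := Real.one_rpow _
  have one2 : (1:ℝ)^(s+2) = 1 := Real.one_rpow _
  have zero1 : (0:ℝ)^(s+1) = 0 := Real.zero_rpow hs1
  have zero2 : (0:ℝ)^(s+2) = 0 := Real.zero_rpow hs2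
  rw [hsplit, e1, e2]
  rw [intervalIntegral.integral_sub (f := fun t : ℝ => t^s) (g := fun t : ℝ => 2 * t^(s+1)) ((aux_rpow_cont hs0.le).intervalIntegrable _ _)
      ((continuous_const.mul (aux_rpow_cont (by positivity : (0:ℝ) ≤ s+1))).intervalIntegrable _ _),
    intervalIntegral.integral_sub (f := fun t : ℝ => 2 * t^(s+1)) (g := fun t : ℝ => t^s)
      ((continuous_const.mul (aux_rpow_cont (by positivity : (0:ℝ) ≤ s+1))).intervalIntegrable _ _)
      ((aux_rpow_cont hs0.le).intervalIntegrable _ _),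
    intervalIntegral.integral_const_mul, intervalIntegral.integral_const_mul,
    i1 0 (1/2) le_rfl, i2 0 (1/2) le_rfl, i1 (1/2) 1 half.le, i2 (1/2) 1 half.le,
    hP1, hP2, one1, one2, zero1, zero2]
  field_simp
  ring

lemma K_sym {s : ℝ} :
    ∫ t in (0:ℝ)..1, |2*t-1| * (1-t)^s = ∫ t in (0:ℝ)..1, |2*t-1| * t^s := by
  have h := intervalIntegral.integral_comp_sub_left (a := (0:ℝ)) (b := 1)
      (fun t => |2*t-1| * t^s) 1
  norm_num at h
  rw [← h]
  apply intervalIntegral.integral_congr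
  intro t _
  show |2*t-1| * (1-t)^s = |2*(1-t)-1| * (1-t)^s
  rw [show 2*(1-t)-1 = -(2*t-1) by ring, abs_neg]

lemma abs_int : ∫ t in (0:ℝ)..1, |2*t-1| = 1/2 := by
  have c1 : Continuous fun t : ℝ => |2*t-1| := by continuity
  have hsp := intervalIntegral.integral_add_adjacent_intervals (a := (0:ℝ)) (b := 1/2) (c := 1)
    (f := fun t => |2*t-1|) (c1.intervalIntegrable (μ := volume) _ _)
    (c1.intervalIntegrable (μ := volume) _ _)
  have ha1 : ∫ t in (0:ℝ)..(1/2), |2*t-1| = ∫ t in (0:ℝ)..(1/2), (1 - 2*t) := by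
    apply intervalIntegral.integral_congr
    intro t ht
    rw [uIcc_of_le (by norm_num)] at ht
    show |2*t-1| = 1 - 2*t
    rw [abs_of_nonpos (by linarith [ht.1, ht.2])]; ring
  have ha2 : ∫ t in (1/2:ℝ)..1, |2*t-1| = ∫ t in (1/2:ℝ)..1, (2*t - 1) := by
    apply intervalIntegral.integral_congr
    intro t ht
    rw [uIcc_of_le (by norm_num)] at ht
    show |2*t-1| = 2*t - 1
    rw [abs_of_nonneg (by linarith [ht.1, ht.2])]
  have hb1 : ∫ t in (0:ℝ)..(1/2), (1 - 2*t) = 1/4 := by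
    have hd : ∀ t ∈ uIcc (0:ℝ) (1/2), HasDerivAt (fun t : ℝ => t - t^2) (1 - 2*t) t := by
      intro t _
      exact ((hasDerivAt_id' t).sub (hasDerivAt_pow 2 t)).congr_deriv (by norm_num)
    rw [intervalIntegral.integral_eq_sub_of_hasDerivAt hd
      ((by continuity : Continuous fun t : ℝ => 1 - 2*t).intervalIntegrable (μ := volume) _ _)]
    norm_num
  have hb2 : ∫ t in (1/2:ℝ)..1, (2*t - 1) = 1/4 := by
    have hd : ∀ t ∈ uIcc (1/2:ℝ) 1, HasDerivAt (fun t : ℝ => t^2 - t) (2*t - 1) t := by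
      intro t _
      exact ((hasDerivAt_pow 2 t).sub (hasDerivAt_id' t)).congr_deriv (by norm_num)
    rw [intervalIntegral.integral_eq_sub_of_hasDerivAt hd
      ((by continuity : Continuous fun t : ℝ => 2*t - 1).intervalIntegrable (μ := volume) _ _)]
    norm_num
  rw [← hsp, ha1, ha2, hb1, hb2]
  norm_num

set_option maxHeartbeats 2000000 in
theorem sconvex_trapezoid_bound_q_gt_one
    (s a b c d q : ℝ) (hs : s ∈ Set.Ioo (0:ℝ) 1) (ha : 0 ≤ a) (hab : a < b)
    (hq : 1 < q) (hsub : Set.Icc a b ⊆ Set.Ioo c d)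
    (f f' : ℝ → ℝ)
    (hdiff : ∀ x ∈ Set.Ioo c d, HasDerivAt f (f' x) x)
    (hsconv : ∀ u ∈ Set.Icc a b, ∀ v ∈ Set.Icc a b, ∀ t ∈ Set.Icc (0:ℝ) 1,
      |f' (t * u + (1 - t) * v)| ^ q ≤ t ^ s * |f' u| ^ q + (1 - t) ^ s * |f' v| ^ q) :
    |(f a + f b) / 2 - (1 / (b - a)) * ∫ x in a..b, f x|
      ≤ ((b - a) / 2) * (1 / 2 : ℝ) ^ ((q - 1) / q)
        * (1 / (s + 1) + ((1 / 2 : ℝ) ^ s - 2) / ((s + 1) * (s + 2))) ^ (1 / q)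
        * (|f' a| ^ q + |f' b| ^ q) ^ (1 / q) := by
  obtain ⟨hs0, hs1'⟩ := hs
  have hq0 : (0:ℝ) < q := by linarith
  have hL : (0:ℝ) < b - a := sub_pos.2 hab
  set A := |f' b| ^ q with hAdef
  set B := |f' a| ^ q with hBdef
  have hA : 0 ≤ A := Real.rpow_nonneg (abs_nonneg _) q
  have hB : 0 ≤ B := Real.rpow_nonneg (abs_nonneg _) q
  set K : ℝ := 1/(s+1) + ((1/2:ℝ)^s - 2)/((s+1)*(s+2)) with hKdef
  set g : ℝ → ℝ := fun t => f' ((b-a)*t + a) with hgdef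
  have hmem : ∀ t ∈ Icc (0:ℝ) 1, (b-a)*t + a ∈ Icc a b := by
    rintro t ⟨h0, h1⟩
    constructor <;> nlinarith
  -- pointwise bound from s-convexity
  have hgbd : ∀ t ∈ Icc (0:ℝ) 1, |g t| ^ q ≤ t^s * A + (1-t)^s * B := by
    intro t ht
    have h := hsconv b (right_mem_Icc.2 hab.le) a (left_mem_Icc.2 hab.le) t ht
    have e : t * b + (1-t) * a = (b-a)*t + a := by ring
    rwa [e] at h
  have hABq : 0 ≤ (A + B) ^ (1/q) := Real.rpow_nonneg (by linarith) _
  have hgabs : ∀ t ∈ Icc (0:ℝ) 1, |g t| ≤ (A + B) ^ (1/q) := by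
    rintro t ⟨h0, h1⟩
    have h2 : |g t| ^ q ≤ A + B := by
      refine (hgbd t ⟨h0, h1⟩).trans ?_
      have e1 : t ^ s ≤ 1 := Real.rpow_le_one h0 h1 hs0.le
      have e2 : (1-t) ^ s ≤ 1 := Real.rpow_le_one (by linarith) (by linarith) hs0.le
      nlinarith [Real.rpow_nonneg h0 s, Real.rpow_nonneg (show (0:ℝ) ≤ 1-t by linarith) s]
    have h3 : (|g t| ^ q) ^ (1/q) = |g t| := by
      rw [one_div]; exact Real.rpow_rpow_inv (abs_nonneg _) hq0.ne'
    rw [← h3]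
    exact Real.rpow_le_rpow (Real.rpow_nonneg (abs_nonneg _) q) h2 (by positivity)
  -- measurability of g on (0,1]
  set μ : Measure ℝ := volume.restrict (Ioc (0:ℝ) 1) with hμdef
  haveI : IsFiniteMeasure μ := by
    constructor
    rw [hμdef, Measure.restrict_apply_univ]
    exact measure_Ioc_lt_top
  have hgm : AEStronglyMeasurable g μ := by
    have hm1 : Measurable fun t : ℝ => deriv f ((b-a)*t + a) :=
      (measurable_deriv f).comp ((measurable_id.const_mul (b-a)).add_const a)
    refine hm1.aestronglyMeasurable.congr ?_
    rw [hμdef]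
    filter_upwards [ae_restrict_mem measurableSet_Ioc] with t ht
    exact ((hdiff _ (hsub (hmem t (Ioc_subset_Icc_self ht)))).deriv)
  -- integrability helper
  have hbdd_int : ∀ (h : ℝ → ℝ) (C : ℝ), AEStronglyMeasurable h μ → (∀ t ∈ Ioc (0:ℝ) 1, |h t| ≤ C) →
      IntervalIntegrable h volume 0 1 := by
    intro h C hm hb
    rw [intervalIntegrable_iff_integrableOn_Ioc_of_le zero_le_one]
    refine ⟨hm, HasFiniteIntegral.of_bounded (C := C) ?_⟩
    filter_upwards [ae_restrict_mem measurableSet_Ioc] with t ht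
    simpa [Real.norm_eq_abs] using hb t ht
  have hgint : IntervalIntegrable g volume 0 1 :=
    hbdd_int g _ hgm (fun t ht => hgabs t (Ioc_subset_Icc_self ht))
  -- Step 1: the identity
  have hv : ∀ x ∈ uIcc (0:ℝ) 1, HasDerivAt (fun t => f ((b-a)*t + a)) ((b-a) * g x) x := by
    intro x hx
    rw [uIcc_of_le zero_le_one] at hx
    have h2 : HasDerivAt (fun t : ℝ => (b-a)*t + a) (b-a) x := by
      simpa using ((hasDerivAt_id x).const_mul (b-a)).add_const a
    have h1 := HasDerivAt.comp x (hdiff _ (hsub (hmem x hx))) h2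
    show HasDerivAt (fun t => f ((b-a)*t+a)) ((b-a) * g x) x
    rw [show (b-a) * g x = f' ((b-a)*x+a) * (b-a) from mul_comm _ _]
    exact h1
  have hu : ∀ x ∈ uIcc (0:ℝ) 1, HasDerivAt (fun t : ℝ => 2*t - 1) 2 x := by
    intro x _
    simpa using ((hasDerivAt_id x).const_mul (2:ℝ)).sub_const 1
  have hparts := intervalIntegral.integral_mul_deriv_eq_deriv_mul hu hv
    (intervalIntegrable_const) (hgint.const_mul (b-a))
  have hsubst : ∫ x in (0:ℝ)..1, f ((b-a)*x + a) = (b-a)⁻¹ • ∫ x in a..b, f x := by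
    have h := intervalIntegral.integral_comp_mul_add (a := (0:ℝ)) (b := 1) f hL.ne' a
    rw [h]; norm_num
  have hident : (f a + f b) / 2 - (1 / (b - a)) * ∫ x in a..b, f x
      = ((b-a)/2) * ∫ t in (0:ℝ)..1, (2*t-1) * g t := by
    have e1 : ∫ x in (0:ℝ)..1, (2*x-1) * ((b-a) * g x)
        = (b-a) * ∫ t in (0:ℝ)..1, (2*t-1) * g t := by
      rw [← intervalIntegral.integral_const_mul]
      apply intervalIntegral.integral_congr
      intro t _; show (2*t-1) * ((b-a) * g t) = (b-a) * ((2*t-1) * g t); ring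
    have e2 : ∫ x in (0:ℝ)..1, 2 * f ((b-a)*x + a)
        = 2 * ((b-a)⁻¹ * ∫ x in a..b, f x) := by
      rw [intervalIntegral.integral_const_mul, hsubst, smul_eq_mul]
    have e3 : (b-a)*1 + a = b := by ring
    have e4 : (b-a)*0 + a = a := by ring
    rw [e1, e3, e4, e2] at hparts
    have hne : b - a ≠ 0 := hL.ne'
    field_simp at hparts ⊢
    nlinarith [hparts]
  -- Step 2: absolute value bound
  have habs2 : |∫ t in (0:ℝ)..1, (2*t-1) * g t| ≤ ∫ t in (0:ℝ)..1, |2*t-1| * |g t| := by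
    refine (intervalIntegral.abs_integral_le_integral_abs zero_le_one).trans_eq ?_
    apply intervalIntegral.integral_congr
    intro t _
    exact abs_mul _ _
  -- Hölder setup
  set p : ℝ := q/(q-1) with hpdef
  have hpq : p.HolderConjugate q := (Real.HolderConjugate.conjExponent hq).symm
  have hppos : 0 < p := hpq.pos
  set F₁ : ℝ → ℝ := fun t => |2*t-1| ^ ((1:ℝ)/p) with hF1def
  set F₂ : ℝ → ℝ := fun t => |2*t-1| ^ ((1:ℝ)/q) * |g t| with hF2def
  have hcabs : Continuous fun t : ℝ => |2*t-1| :=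
    continuous_abs.comp ((continuous_const.mul continuous_id).sub continuous_const)
  have habs_le : ∀ t ∈ Ioc (0:ℝ) 1, |2*t-1| ≤ 1 := by
    rintro t ⟨h0, h1⟩
    rw [abs_le]; constructor <;> linarith
  have hF1mem : MemLp F₁ (ENNReal.ofReal p) μ := by
    refine MemLp.of_bound (((aux_rpow_cont (by positivity)).comp hcabs).aestronglyMeasurable) 1 ?_
    filter_upwards [ae_restrict_mem measurableSet_Ioc] with t ht
    rw [Real.norm_eq_abs, abs_of_nonneg (Real.rpow_nonneg (abs_nonneg _) _)]
    exact Real.rpow_le_one (abs_nonneg _) (habs_le t ht) (by positivity)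
  have hagm : AEStronglyMeasurable (fun t => |g t|) μ := by
    simpa [Real.norm_eq_abs] using hgm.norm
  have hF2m : AEStronglyMeasurable F₂ μ :=
    (((aux_rpow_cont (by positivity)).comp hcabs).aestronglyMeasurable).mul hagm
  have hF2mem : MemLp F₂ (ENNReal.ofReal q) μ := by
    refine MemLp.of_bound hF2m ((A+B)^(1/q)) ?_
    filter_upwards [ae_restrict_mem measurableSet_Ioc] with t ht
    rw [Real.norm_eq_abs,
      abs_of_nonneg (mul_nonneg (Real.rpow_nonneg (abs_nonneg _) _) (abs_nonneg _))]
    calc |2*t-1| ^ ((1:ℝ)/q) * |g t| ≤ 1 * ((A+B)^(1/q)) := by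
          apply mul_le_mul (Real.rpow_le_one (abs_nonneg _) (habs_le t ht) (by positivity))
            (hgabs t (Ioc_subset_Icc_self ht)) (abs_nonneg _) zero_le_one
      _ = (A+B)^(1/q) := one_mul _
  have hHold := integral_mul_le_Lp_mul_Lq_of_nonneg hpq
    (Filter.Eventually.of_forall fun t => Real.rpow_nonneg (abs_nonneg _) _)
    (Filter.Eventually.of_forall fun t => mul_nonneg (Real.rpow_nonneg (abs_nonneg _) _) (abs_nonneg _))
    hF1mem hF2mem
  have conv : ∀ h : ℝ → ℝ, ∫ t in (0:ℝ)..1, h t = ∫ t, h t ∂μ :=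
    fun h => intervalIntegral.integral_of_le zero_le_one
  have hsum1 : (1:ℝ)/p + 1/q = 1 := by
    rw [one_div, one_div]; exact hpq.inv_add_inv_eq_one
  have eqprod : ∀ t, F₁ t * F₂ t = |2*t-1| * |g t| := by
    intro t
    have h2 : |2*t-1| ^ ((1:ℝ)/p + 1/q) = |2*t-1|^((1:ℝ)/p) * |2*t-1|^((1:ℝ)/q) :=
      Real.rpow_add' (abs_nonneg _) (by rw [hsum1]; norm_num)
    calc F₁ t * F₂ t = (|2*t-1|^((1:ℝ)/p) * |2*t-1|^((1:ℝ)/q)) * |g t| := by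
          rw [hF1def, hF2def]; ring
      _ = |2*t-1| ^ ((1:ℝ)/p + 1/q) * |g t| := by rw [← h2]
      _ = |2*t-1| * |g t| := by rw [hsum1, Real.rpow_one]
  have eqF1p : ∀ t, F₁ t ^ p = |2*t-1| := by
    intro t
    rw [hF1def, ← Real.rpow_mul (abs_nonneg _), one_div, inv_mul_cancel₀ hppos.ne',
      Real.rpow_one]
  have eqF2q : ∀ t, F₂ t ^ q = |2*t-1| * |g t|^q := by
    intro t
    rw [hF2def, Real.mul_rpow (Real.rpow_nonneg (abs_nonneg _) _) (abs_nonneg _),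
      ← Real.rpow_mul (abs_nonneg _), one_div, inv_mul_cancel₀ hq0.ne', Real.rpow_one]
  have h2' : ∫ t, F₁ t ^ p ∂μ = 1/2 := by
    calc ∫ t, F₁ t ^ p ∂μ = ∫ t in (0:ℝ)..1, F₁ t ^ p := (conv _).symm
      _ = ∫ t in (0:ℝ)..1, |2*t-1| := by
          apply intervalIntegral.integral_congr; intro t _; exact eqF1p t
      _ = 1/2 := abs_int
  have h3' : ∫ t, F₂ t ^ q ∂μ = ∫ t in (0:ℝ)..1, |2*t-1| * |g t|^q := by
    calc ∫ t, F₂ t ^ q ∂μ = ∫ t in (0:ℝ)..1, F₂ t ^ q := (conv _).symm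
      _ = ∫ t in (0:ℝ)..1, |2*t-1| * |g t|^q := by
          apply intervalIntegral.integral_congr; intro t _; exact eqF2q t
  have h1' : ∫ t in (0:ℝ)..1, |2*t-1| * |g t| = ∫ t, F₁ t * F₂ t ∂μ := by
    rw [conv]
    exact integral_congr_ae (Filter.Eventually.of_forall fun t => (eqprod t).symm)
  have hHold' : ∫ t in (0:ℝ)..1, |2*t-1| * |g t|
      ≤ (1/2:ℝ)^((q-1)/q) * (∫ t in (0:ℝ)..1, |2*t-1| * |g t|^q)^(1/q) := by
    rw [h2', h3'] at hHold
    rw [h1']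
    refine hHold.trans_eq ?_
    congr 1
    rw [hpdef, one_div_div]
  -- Step 4: monotone bound on the inner integral
  have hgq_aesm : AEStronglyMeasurable (fun t => |g t| ^ q) μ :=
    (aux_rpow_cont hq0.le).comp_aestronglyMeasurable hagm
  have hintL : IntervalIntegrable (fun t => |2*t-1| * |g t|^q) volume 0 1 := by
    refine hbdd_int _ (A + B) (hcabs.aestronglyMeasurable.mul hgq_aesm) ?_
    intro t ht
    rw [abs_of_nonneg (mul_nonneg (abs_nonneg _) (Real.rpow_nonneg (abs_nonneg _) _))]
    calc |2*t-1| * |g t|^q ≤ 1 * (A + B) := by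
          apply mul_le_mul (habs_le t ht) ?_ (Real.rpow_nonneg (abs_nonneg _) _) zero_le_one
          have h2 := hgbd t (Ioc_subset_Icc_self ht)
          obtain ⟨h0, h1⟩ := Ioc_subset_Icc_self ht
          have e1 : t ^ s ≤ 1 := Real.rpow_le_one h0 h1 hs0.le
          have e2 : (1-t) ^ s ≤ 1 := Real.rpow_le_one (by linarith) (by linarith) hs0.le
          nlinarith [Real.rpow_nonneg h0 s, Real.rpow_nonneg (show (0:ℝ) ≤ 1-t by linarith) s]
      _ = A + B := one_mul _
  have hcs : Continuous fun t : ℝ => t ^ s := aux_rpow_cont hs0.le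
  have hcs1 : Continuous fun t : ℝ => (1-t) ^ s := hcs.comp (continuous_const.sub continuous_id)
  have hcontR : Continuous fun t : ℝ => |2*t-1| * (t^s * A + (1-t)^s * B) :=
    hcabs.mul ((hcs.mul continuous_const).add (hcs1.mul continuous_const))
  have hRHSint : ∫ t in (0:ℝ)..1, |2*t-1| * (t^s * A + (1-t)^s * B) = K * (A + B) := by
    have e : ∫ t in (0:ℝ)..1, |2*t-1| * (t^s * A + (1-t)^s * B)
        = ∫ t in (0:ℝ)..1, (A * (|2*t-1| * t^s) + B * (|2*t-1| * (1-t)^s)) := by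
      apply intervalIntegral.integral_congr
      intro t _
      show |2*t-1| * (t^s * A + (1-t)^s * B) = A * (|2*t-1| * t^s) + B * (|2*t-1| * (1-t)^s)
      ring
    rw [e, intervalIntegral.integral_add (f := fun t => A * (|2*t-1| * t^s)) (g := fun t => B * (|2*t-1| * (1-t)^s))
        ((continuous_const.mul (hcabs.mul hcs)).intervalIntegrable (μ := volume) _ _)
        ((continuous_const.mul (hcabs.mul hcs1)).intervalIntegrable (μ := volume) _ _),
      intervalIntegral.integral_const_mul, intervalIntegral.integral_const_mul,
      K_int hs0, K_sym, K_int hs0, ← hKdef]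
    ring
  have hmono : ∫ t in (0:ℝ)..1, |2*t-1| * |g t|^q ≤ K * (A + B) := by
    rw [← hRHSint]
    apply intervalIntegral.integral_mono_on zero_le_one hintL
      (hcontR.intervalIntegrable _ _)
    intro t ht
    exact mul_le_mul_of_nonneg_left (hgbd t ht) (abs_nonneg _)
  have hKnn : 0 ≤ K := by
    rw [hKdef, ← K_int hs0]
    apply intervalIntegral.integral_nonneg zero_le_one
    intro t ht
    exact mul_nonneg (abs_nonneg _) (Real.rpow_nonneg ht.1 _)
  -- final assembly
  rw [hident, abs_mul, abs_of_nonneg (by positivity : (0:ℝ) ≤ (b-a)/2)]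
  have hinn : (0:ℝ) ≤ ∫ t in (0:ℝ)..1, |2*t-1| * |g t|^q :=
    intervalIntegral.integral_nonneg zero_le_one fun t _ =>
      mul_nonneg (abs_nonneg _) (Real.rpow_nonneg (abs_nonneg _) _)
  calc ((b-a)/2) * |∫ t in (0:ℝ)..1, (2*t-1) * g t|
      ≤ ((b-a)/2) * ((1/2:ℝ)^((q-1)/q) * ((K * (A + B))^(1/q))) := by
        apply mul_le_mul_of_nonneg_left _ (by positivity)
        refine habs2.trans (hHold'.trans ?_)
        apply mul_le_mul_of_nonneg_left _ (Real.rpow_nonneg (by norm_num) _)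
        exact Real.rpow_le_rpow hinn hmono (by positivity)
    _ = ((b - a) / 2) * (1 / 2 : ℝ) ^ ((q - 1) / q) * K ^ (1 / q) * (B + A) ^ (1 / q) := by
        rw [Real.mul_rpow hKnn (by linarith : (0:ℝ) ≤ A + B), add_comm A B]
        ring
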